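/- Let A be a commutative unital C*-algebra and I an isocone of A. Define a relation ⪯ on the character space X(A) (the set of nonzero algebra homomorphisms χ : A → ℂ with the weak-* topology) by χ₁ ⪯ χ₂ if and only if χ₁(a) ≤ χ₂(a) for all a ∈ I (these values are real since each a ∈ I is self-adjoint). Then: (a) ⪯ is a partial order making the compact Hausdorff space X(A) a toposet; and (b) I is exactly the set of self-adjoint elements a ∈ A whose Gelfand transform â : X(A) → ℝ, â(χ) = χ(a), is isotone for ⪯. -/

import Mathlib

open scoped ComplexOrder

def IsState {A : Type*} [CStarAlgebra A] (φ : A →ₗ[ℂ] ℂ) : Prop :=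
  φ 1 = 1 ∧ ∀ a : A, 0 ≤ φ (star a * a)

def IsIsocone {A : Type*} [CStarAlgebra A] (I : Set A) : Prop :=
  I.Nonempty ∧
  (∀ a ∈ I, IsSelfAdjoint a) ∧
  (∀ a ∈ I, ∀ f : ℝ → ℝ, Continuous f → Monotone f → cfc f a ∈ I) ∧
  (∀ a ∈ I, ∀ b ∈ I, a + b ∈ I) ∧
  IsClosed I ∧
  (∀ φ ψ : A →ₗ[ℂ] ℂ, IsState φ → IsState ψ → (∀ a ∈ I, φ a = ψ a) → φ = ψ)

open WeakDual

section Aux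

variable {A : Type*} [CommCStarAlgebra A]

lemma char_real {a : A} (ha : IsSelfAdjoint a) (χ : characterSpace ℂ A) :
    χ a = ((χ a).re : ℂ) := by
  have h := map_star χ a
  rw [ha.star_eq] at h
  have h2 : (starRingEnd ℂ) (χ a) = χ a := h.symm
  exact (Complex.conj_eq_iff_re.mp h2).symm

lemma char_sa {a : A} (ha : IsSelfAdjoint a) (χ : characterSpace ℂ A) :
    IsSelfAdjoint (χ a) := by
  rw [IsSelfAdjoint, char_real ha χ, Complex.star_def, Complex.conj_ofReal]

lemma char_cfc {a : A} (ha : IsSelfAdjoint a) (f : ℝ → ℝ) (hf : Continuous f)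
    (χ : characterSpace ℂ A) :
    χ (cfc f a) = ((f ((χ a).re) : ℝ) : ℂ) := by
  have hsa : IsSelfAdjoint (χ a) := char_sa ha χ
  have h1 : χ (cfc f a) = cfc f (χ a) :=
    StarAlgHomClass.map_cfc χ f a hf.continuousOn (map_continuous χ) ha hsa
  rw [h1, char_real ha χ]
  have h2 : ((χ a).re : ℂ) = algebraMap ℝ ℂ ((χ a).re) := rfl
  rw [h2, cfc_algebraMap ((χ a).re) f]
  rfl

lemma char_abs_re_le (a : A) (χ : characterSpace ℂ A) : |(χ a).re| ≤ ‖a‖ := by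
  have h1 : ‖χ a‖ ≤ ‖a‖ := by
    have := ContinuousMap.norm_coe_le_norm (gelfandTransform ℂ A a) χ
    rwa [(gelfandTransform_isometry A).norm_map_of_map_zero (map_zero _)] at this
  exact (Complex.abs_re_le_norm (χ a)).trans h1

lemma mem_of_char_approx {I : Set A} (hI : IsIsocone I) {a : A} (ha : IsSelfAdjoint a)
    (h : ∀ ε : ℝ, 0 < ε → ∃ b ∈ I, ∀ χ : characterSpace ℂ A, |(χ a).re - (χ b).re| ≤ ε) :
    a ∈ I := by
  rw [← hI.2.2.2.2.1.closure_eq, Metric.mem_closure_iff]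
  intro ε hε
  obtain ⟨b, hbI, hb⟩ := h (ε / 2) (by positivity)
  refine ⟨b, hbI, ?_⟩
  have hab : dist a b = ‖gelfandTransform ℂ A a - gelfandTransform ℂ A b‖ := by
    rw [← dist_eq_norm, (gelfandTransform_isometry A).dist_eq]
  rw [hab]
  have hbsa : IsSelfAdjoint b := hI.2.1 b hbI
  have hle : ‖gelfandTransform ℂ A a - gelfandTransform ℂ A b‖ ≤ ε / 2 := by
    rw [ContinuousMap.norm_le _ (by positivity)]
    intro χ
    have h3 : (gelfandTransform ℂ A a - gelfandTransform ℂ A b) χ = χ a - χ b := rfl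
    rw [h3, char_real ha χ, char_real hbsa χ, ← Complex.ofReal_sub, Complex.norm_real]
    exact hb χ
  linarith

lemma exists_sup {I : Set A} (hI : IsIsocone I) {b c : A} (hb : b ∈ I) (hc : c ∈ I) :
    ∃ m ∈ I, ∀ χ : characterSpace ℂ A, (χ m).re = max ((χ b).re) ((χ c).re) := by
  have hbsa := hI.2.1 b hb
  have hcsa := hI.2.1 c hc
  have hcont : Continuous fun χ : characterSpace ℂ A =>
      ((max ((χ b).re) ((χ c).re) : ℝ) : ℂ) := by
    apply Complex.continuous_ofReal.comp
    exact (Complex.continuous_re.comp (map_continuous (gelfandTransform ℂ A b))).max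
      (Complex.continuous_re.comp (map_continuous (gelfandTransform ℂ A c)))
  obtain ⟨m, hm⟩ := (gelfandTransform_bijective A).2 ⟨_, hcont⟩
  have hmval : ∀ χ : characterSpace ℂ A, χ m = ((max ((χ b).re) ((χ c).re) : ℝ) : ℂ) := by
    intro χ
    have := congrArg (fun F => F χ) hm
    simpa using this
  have hmre : ∀ χ : characterSpace ℂ A, (χ m).re = max ((χ b).re) ((χ c).re) := by
    intro χ; rw [hmval χ]; simp
  have hmsa : IsSelfAdjoint m := by
    have h1 : gelfandTransform ℂ A (star m) = gelfandTransform ℂ A m := by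
      rw [gelfandTransform_map_star]
      ext χ
      show star ((gelfandTransform ℂ A m) χ) = (gelfandTransform ℂ A m) χ
      have h2 : (gelfandTransform ℂ A m) χ = χ m := rfl
      rw [h2, hmval χ, Complex.star_def, Complex.conj_ofReal]
    exact (gelfandTransform_isometry A).injective h1
  refine ⟨m, ?_, hmre⟩
  apply mem_of_char_approx hI hmsa
  intro ε hε
  set n : ℝ := max 1 (Real.log 2 / ε) with hn
  have hn0 : (0:ℝ) < n := lt_of_lt_of_le one_pos (le_max_left _ _)
  have hnε : Real.log 2 / n ≤ ε := by
    rw [div_le_iff₀ hn0]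
    calc Real.log 2 = ε * (Real.log 2 / ε) := by field_simp
    _ ≤ ε * n := by
        apply mul_le_mul_of_nonneg_left (le_max_right _ _) hε.le
  set M : ℝ := ‖b‖ + ‖c‖ + 1 with hM
  have hβM : ∀ χ : characterSpace ℂ A, -M ≤ (χ b).re ∧ (χ b).re ≤ M := by
    intro χ
    have := abs_le.mp (char_abs_re_le b χ)
    have hc0 : (0:ℝ) ≤ ‖c‖ := norm_nonneg c
    constructor <;> [linarith [this.1]; linarith [this.2]]
  have hγM : ∀ χ : characterSpace ℂ A, -M ≤ (χ c).re ∧ (χ c).re ≤ M := by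
    intro χ
    have := abs_le.mp (char_abs_re_le c χ)
    have hb0 : (0:ℝ) ≤ ‖b‖ := norm_nonneg b
    constructor <;> [linarith [this.1]; linarith [this.2]]
  set θ : ℝ → ℝ := fun t => Real.exp (n * t) with hθ
  have hθc : Continuous θ := by fun_prop
  have hθm : Monotone θ := fun s t h =>
    Real.exp_le_exp.mpr (mul_le_mul_of_nonneg_left h hn0.le)
  set u : A := cfc θ b + cfc θ c with hu
  have huI : u ∈ I := hI.2.2.2.1 _ (hI.2.2.1 b hb θ hθc hθm) _ (hI.2.2.1 c hc θ hθc hθm)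
  have husa : IsSelfAdjoint u := hI.2.1 u huI
  have huval : ∀ χ : characterSpace ℂ A, (χ u).re = θ ((χ b).re) + θ ((χ c).re) := by
    intro χ
    have h1 : χ u = χ (cfc θ b) + χ (cfc θ c) := map_add χ _ _
    rw [h1, char_cfc hbsa θ hθc, char_cfc hcsa θ hθc, ← Complex.ofReal_add]
    simp
  set δ : ℝ := Real.exp (n * (-M)) with hδ
  have hδ0 : (0:ℝ) < δ := Real.exp_pos _
  set ψ : ℝ → ℝ := fun s => (1 / n) * Real.log (max s δ) with hψ
  have hψc : Continuous ψ := by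
    apply Continuous.mul continuous_const
    exact (continuous_id.max continuous_const).log fun s => by positivity

  have hψm : Monotone ψ := by
    intro s t h
    apply mul_le_mul_of_nonneg_left _ (by positivity)
    exact Real.log_le_log (lt_max_of_lt_right hδ0) (max_le_max h le_rfl)
  refine ⟨cfc ψ u, hI.2.2.1 u huI ψ hψc hψm, ?_⟩
  intro χ
  have hv : (χ (cfc ψ u)).re = ψ ((χ u).re) := by
    rw [char_cfc husa ψ hψc]; simp
  set β := (χ b).re
  set γ := (χ c).re
  have hEδ : δ ≤ θ β + θ γ := by
    have h1 : δ ≤ θ β := Real.exp_le_exp.mpr (mul_le_mul_of_nonneg_left (hβM χ).1 hn0.le)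
    have h2 : (0:ℝ) < θ γ := Real.exp_pos _
    linarith
  have hE0 : (0:ℝ) < θ β + θ γ := lt_of_lt_of_le hδ0 hEδ
  have hveq : (χ (cfc ψ u)).re = (1 / n) * Real.log (θ β + θ γ) := by
    rw [hv, huval χ]
    show (1 / n) * Real.log (max (θ β + θ γ) δ) = _
    rw [max_eq_left hEδ]
  have hlow : n * max β γ ≤ Real.log (θ β + θ γ) := by
    have h1 : Real.exp (n * max β γ) ≤ θ β + θ γ := by
      rcases max_cases β γ with ⟨h, _⟩ | ⟨h, _⟩ <;> rw [h]
      · exact le_add_of_nonneg_right (Real.exp_pos _).le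
      · exact le_add_of_nonneg_left (Real.exp_pos _).le
    calc n * max β γ = Real.log (Real.exp (n * max β γ)) := (Real.log_exp _).symm
    _ ≤ _ := Real.log_le_log (Real.exp_pos _) h1
  have hhigh : Real.log (θ β + θ γ) ≤ Real.log 2 + n * max β γ := by
    have h1 : θ β + θ γ ≤ 2 * Real.exp (n * max β γ) := by
      have hb1 : θ β ≤ Real.exp (n * max β γ) :=
        Real.exp_le_exp.mpr (mul_le_mul_of_nonneg_left (le_max_left _ _) hn0.le)
      have hc1 : θ γ ≤ Real.exp (n * max β γ) :=
        Real.exp_le_exp.mpr (mul_le_mul_of_nonneg_left (le_max_right _ _) hn0.le)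
      linarith
    calc Real.log (θ β + θ γ) ≤ Real.log (2 * Real.exp (n * max β γ)) :=
          Real.log_le_log hE0 h1
    _ = Real.log 2 + n * max β γ := by
          rw [Real.log_mul two_ne_zero (Real.exp_ne_zero _), Real.log_exp]
  have e1 : max β γ ≤ (1 / n) * Real.log (θ β + θ γ) := by
    have := mul_le_mul_of_nonneg_left hlow (le_of_lt (one_div_pos.mpr hn0))
    calc max β γ = (1 / n) * (n * max β γ) := by field_simp
    _ ≤ _ := this
  have e2 : (1 / n) * Real.log (θ β + θ γ) ≤ Real.log 2 / n + max β γ := by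
    have := mul_le_mul_of_nonneg_left hhigh (le_of_lt (one_div_pos.mpr hn0))
    calc (1 / n) * Real.log (θ β + θ γ) ≤ (1 / n) * (Real.log 2 + n * max β γ) := this
    _ = Real.log 2 / n + max β γ := by field_simp
  rw [hmre χ, hveq]
  rw [abs_le]
  constructor <;> [linarith; linarith]

lemma exists_inf {I : Set A} (hI : IsIsocone I) {b c : A} (hb : b ∈ I) (hc : c ∈ I) :
    ∃ m ∈ I, ∀ χ : characterSpace ℂ A, (χ m).re = min ((χ b).re) ((χ c).re) := by
  have hbsa := hI.2.1 b hb
  have hcsa := hI.2.1 c hc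
  have hcont : Continuous fun χ : characterSpace ℂ A =>
      ((min ((χ b).re) ((χ c).re) : ℝ) : ℂ) := by
    apply Complex.continuous_ofReal.comp
    exact (Complex.continuous_re.comp (map_continuous (gelfandTransform ℂ A b))).min
      (Complex.continuous_re.comp (map_continuous (gelfandTransform ℂ A c)))
  obtain ⟨m, hm⟩ := (gelfandTransform_bijective A).2 ⟨_, hcont⟩
  have hmval : ∀ χ : characterSpace ℂ A, χ m = ((min ((χ b).re) ((χ c).re) : ℝ) : ℂ) := by
    intro χ
    have := congrArg (fun F => F χ) hm
    simpa using this
  have hmre : ∀ χ : characterSpace ℂ A, (χ m).re = min ((χ b).re) ((χ c).re) := by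
    intro χ; rw [hmval χ]; simp
  have hmsa : IsSelfAdjoint m := by
    have h1 : gelfandTransform ℂ A (star m) = gelfandTransform ℂ A m := by
      rw [gelfandTransform_map_star]
      ext χ
      show star ((gelfandTransform ℂ A m) χ) = (gelfandTransform ℂ A m) χ
      have h2 : (gelfandTransform ℂ A m) χ = χ m := rfl
      rw [h2, hmval χ, Complex.star_def, Complex.conj_ofReal]
    exact (gelfandTransform_isometry A).injective h1
  refine ⟨m, ?_, hmre⟩
  apply mem_of_char_approx hI hmsa
  intro ε hε
  set n : ℝ := max 1 (Real.log 2 / ε) with hn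
  have hn0 : (0:ℝ) < n := lt_of_lt_of_le one_pos (le_max_left _ _)
  have hnε : Real.log 2 / n ≤ ε := by
    rw [div_le_iff₀ hn0]
    calc Real.log 2 = ε * (Real.log 2 / ε) := by field_simp
    _ ≤ ε * n := by
        apply mul_le_mul_of_nonneg_left (le_max_right _ _) hε.le
  set M : ℝ := ‖b‖ + ‖c‖ + 1 with hM
  have hβM : ∀ χ : characterSpace ℂ A, -M ≤ (χ b).re ∧ (χ b).re ≤ M := by
    intro χ
    have := abs_le.mp (char_abs_re_le b χ)
    have hc0 : (0:ℝ) ≤ ‖c‖ := norm_nonneg c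
    constructor <;> [linarith [this.1]; linarith [this.2]]
  have hγM : ∀ χ : characterSpace ℂ A, -M ≤ (χ c).re ∧ (χ c).re ≤ M := by
    intro χ
    have := abs_le.mp (char_abs_re_le c χ)
    have hb0 : (0:ℝ) ≤ ‖b‖ := norm_nonneg b
    constructor <;> [linarith [this.1]; linarith [this.2]]
  set θ : ℝ → ℝ := fun t => -Real.exp (-(n * t)) with hθ
  have hθc : Continuous θ := by fun_prop
  have hθm : Monotone θ := by
    intro s t h
    have : -(n * t) ≤ -(n * s) := by
      have := mul_le_mul_of_nonneg_left h hn0.le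
      linarith
    have := Real.exp_le_exp.mpr this
    simp only [hθ]
    linarith
  set u : A := cfc θ b + cfc θ c with hu
  have huI : u ∈ I := hI.2.2.2.1 _ (hI.2.2.1 b hb θ hθc hθm) _ (hI.2.2.1 c hc θ hθc hθm)
  have husa : IsSelfAdjoint u := hI.2.1 u huI
  have huval : ∀ χ : characterSpace ℂ A, (χ u).re = θ ((χ b).re) + θ ((χ c).re) := by
    intro χ
    have h1 : χ u = χ (cfc θ b) + χ (cfc θ c) := map_add χ _ _
    rw [h1, char_cfc hbsa θ hθc, char_cfc hcsa θ hθc, ← Complex.ofReal_add]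
    simp
  set δ : ℝ := Real.exp (-(n * M)) with hδ
  have hδ0 : (0:ℝ) < δ := Real.exp_pos _
  set ψ : ℝ → ℝ := fun s => -((1 / n) * Real.log (max (-s) δ)) with hψ
  have hψc : Continuous ψ := by
    apply Continuous.neg
    apply Continuous.mul continuous_const
    exact (continuous_neg.max continuous_const).log fun s => by positivity
  have hψm : Monotone ψ := by
    intro s t h
    apply neg_le_neg
    apply mul_le_mul_of_nonneg_left _ (by positivity)
    exact Real.log_le_log (lt_max_of_lt_right hδ0) (max_le_max (neg_le_neg h) le_rfl)
  refine ⟨cfc ψ u, hI.2.2.1 u huI ψ hψc hψm, ?_⟩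
  intro χ
  have hv : (χ (cfc ψ u)).re = ψ ((χ u).re) := by
    rw [char_cfc husa ψ hψc]; simp
  set β := (χ b).re
  set γ := (χ c).re
  set E : ℝ := Real.exp (-(n * β)) + Real.exp (-(n * γ)) with hE
  have hEδ : δ ≤ E := by
    have h1 : δ ≤ Real.exp (-(n * β)) := by
      apply Real.exp_le_exp.mpr
      have := mul_le_mul_of_nonneg_left (hβM χ).2 hn0.le
      linarith
    have h2 : (0:ℝ) < Real.exp (-(n * γ)) := Real.exp_pos _
    linarith
  have hE0 : (0:ℝ) < E := lt_of_lt_of_le hδ0 hEδ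
  have hveq : (χ (cfc ψ u)).re = -((1 / n) * Real.log E) := by
    rw [hv, huval χ]
    show -((1 / n) * Real.log (max (-(θ β + θ γ)) δ)) = _
    have h1 : -(θ β + θ γ) = E := by simp only [hθ, hE]; ring
    rw [h1, max_eq_left hEδ]
  have hlow : -(n * min β γ) ≤ Real.log E := by
    have h1 : Real.exp (-(n * min β γ)) ≤ E := by
      rcases min_cases β γ with ⟨h, _⟩ | ⟨h, _⟩ <;> rw [h]
      · exact le_add_of_nonneg_right (Real.exp_pos _).le
      · exact le_add_of_nonneg_left (Real.exp_pos _).le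
    calc -(n * min β γ) = Real.log (Real.exp (-(n * min β γ))) := (Real.log_exp _).symm
    _ ≤ _ := Real.log_le_log (Real.exp_pos _) h1
  have hhigh : Real.log E ≤ Real.log 2 + -(n * min β γ) := by
    have h1 : E ≤ 2 * Real.exp (-(n * min β γ)) := by
      have hb1 : Real.exp (-(n * β)) ≤ Real.exp (-(n * min β γ)) := by
        apply Real.exp_le_exp.mpr
        have := mul_le_mul_of_nonneg_left (min_le_left β γ) hn0.le
        linarith
      have hc1 : Real.exp (-(n * γ)) ≤ Real.exp (-(n * min β γ)) := by
        apply Real.exp_le_exp.mpr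
        have := mul_le_mul_of_nonneg_left (min_le_right β γ) hn0.le
        linarith
      linarith
    calc Real.log E ≤ Real.log (2 * Real.exp (-(n * min β γ))) :=
          Real.log_le_log hE0 h1
    _ = Real.log 2 + -(n * min β γ) := by
          rw [Real.log_mul two_ne_zero (Real.exp_ne_zero _), Real.log_exp]
  have e1 : -(min β γ) ≤ (1 / n) * Real.log E := by
    have := mul_le_mul_of_nonneg_left hlow (le_of_lt (one_div_pos.mpr hn0))
    calc -(min β γ) = (1 / n) * -(n * min β γ) := by field_simp
    _ ≤ _ := this
  have e2 : (1 / n) * Real.log E ≤ Real.log 2 / n + -(min β γ) := by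
    have := mul_le_mul_of_nonneg_left hhigh (le_of_lt (one_div_pos.mpr hn0))
    calc (1 / n) * Real.log E ≤ (1 / n) * (Real.log 2 + -(n * min β γ)) := this
    _ = Real.log 2 / n + -(min β γ) := by field_simp
  rw [hmre χ, hveq]
  rw [abs_le]
  constructor <;> [linarith; linarith]

lemma exists_finset_sup {I : Set A} (hI : IsIsocone I) {ι : Type*} {t : Finset ι}
    (ht : t.Nonempty) (F : ι → A) :
    (∀ i ∈ t, F i ∈ I) →
      ∃ m ∈ I, ∀ χ : characterSpace ℂ A, (χ m).re = t.sup' ht fun i => (χ (F i)).re := by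
  classical
  induction ht using Finset.Nonempty.cons_induction with
  | singleton a =>
    intro hF
    exact ⟨F a, hF a (Finset.mem_singleton_self a), fun χ => by simp⟩
  | cons a s h hs ih =>
    intro hF
    obtain ⟨m, hmI, hmv⟩ := ih (fun i hi => hF i (Finset.mem_cons_of_mem hi))
    obtain ⟨M, hMI, hMv⟩ := exists_sup hI (hF a (Finset.mem_cons_self a s)) hmI
    refine ⟨M, hMI, fun χ => ?_⟩
    rw [hMv χ, hmv χ, Finset.sup'_cons hs]

lemma exists_finset_inf {I : Set A} (hI : IsIsocone I) {ι : Type*} {t : Finset ι}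
    (ht : t.Nonempty) (F : ι → A) :
    (∀ i ∈ t, F i ∈ I) →
      ∃ m ∈ I, ∀ χ : characterSpace ℂ A, (χ m).re = t.inf' ht fun i => (χ (F i)).re := by
  classical
  induction ht using Finset.Nonempty.cons_induction with
  | singleton a =>
    intro hF
    exact ⟨F a, hF a (Finset.mem_singleton_self a), fun χ => by simp⟩
  | cons a s h hs ih =>
    intro hF
    obtain ⟨m, hmI, hmv⟩ := ih (fun i hi => hF i (Finset.mem_cons_of_mem hi))
    obtain ⟨M, hMI, hMv⟩ := exists_inf hI (hF a (Finset.mem_cons_self a s)) hmI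
    refine ⟨M, hMI, fun χ => ?_⟩
    rw [hMv χ, hmv χ, Finset.inf'_cons hs]

end Aux

/-- Gelfand duality for commutative I*-algebras.  For an isocone `I` of a
commutative unital C*-algebra `A`, the relation `χ₁ ⪯ χ₂ ↔ ∀ a ∈ I, χ₁ a ≤ χ₂ a` on the
character space is a partial order making it a toposet, and `I` is exactly the set of
self-adjoint elements whose Gelfand transform is isotone. -/
theorem commutative_isocone_duality {A : Type*} [CommCStarAlgebra A]
    (I : Set A) (hI : IsIsocone I)
    (r : WeakDual.characterSpace ℂ A → WeakDual.characterSpace ℂ A → Prop)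
    (hr : ∀ χ₁ χ₂, r χ₁ χ₂ ↔ ∀ a ∈ I, χ₁ a ≤ χ₂ a) :
    -- (a) `r` is a partial order …
    (∀ χ, r χ χ) ∧
    (∀ χ₁ χ₂ χ₃, r χ₁ χ₂ → r χ₂ χ₃ → r χ₁ χ₃) ∧
    (∀ χ₁ χ₂, r χ₁ χ₂ → r χ₂ χ₁ → χ₁ = χ₂) ∧
    -- … making the character space a toposet:
    (∀ χ₁ χ₂, r χ₁ χ₂ ↔
      ∀ f : WeakDual.characterSpace ℂ A → ℝ, Continuous f →
        (∀ φ ψ, r φ ψ → f φ ≤ f ψ) → f χ₁ ≤ f χ₂) ∧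
    -- (b) `I` consists exactly of the self-adjoint elements with isotone Gelfand transform:
    (∀ a : A, a ∈ I ↔ (IsSelfAdjoint a ∧ ∀ χ₁ χ₂, r χ₁ χ₂ → χ₁ a ≤ χ₂ a)) := by
  have hsa := hI.2.1
  refine ⟨fun χ => (hr χ χ).2 fun a _ => le_rfl,
    fun χ₁ χ₂ χ₃ h12 h23 => (hr χ₁ χ₃).2 fun a ha =>
      le_trans ((hr χ₁ χ₂).1 h12 a ha) ((hr χ₂ χ₃).1 h23 a ha),
    ?_, ?_, ?_⟩
  · -- antisymmetry
    intro χ₁ χ₂ h12 h21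
    have key : ∀ χ : characterSpace ℂ A, ∃ L : A →ₗ[ℂ] ℂ, IsState L ∧ ∀ a, L a = χ a := by
      intro χ
      refine ⟨{ toFun := fun a => χ a, map_add' := map_add χ, map_smul' := map_smul χ },
        ⟨map_one χ, ?_⟩, fun a => rfl⟩
      intro a
      show (0 : ℂ) ≤ χ (star a * a)
      rw [map_mul, map_star]
      exact star_mul_self_nonneg (χ a)
    obtain ⟨L₁, hL₁, hL₁v⟩ := key χ₁
    obtain ⟨L₂, hL₂, hL₂v⟩ := key χ₂
    have heq : L₁ = L₂ := hI.2.2.2.2.2 L₁ L₂ hL₁ hL₂ fun a ha => by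
      rw [hL₁v, hL₂v]
      exact le_antisymm ((hr χ₁ χ₂).1 h12 a ha) ((hr χ₂ χ₁).1 h21 a ha)
    apply WeakDual.CharacterSpace.ext
    intro x
    rw [← hL₁v x, ← hL₂v x, heq]
  · -- toposet
    intro χ₁ χ₂
    refine ⟨fun h f hf hiso => hiso χ₁ χ₂ h, fun h => (hr χ₁ χ₂).2 fun a ha => ?_⟩
    have hcont : Continuous fun χ : characterSpace ℂ A => (χ a).re :=
      Complex.continuous_re.comp (map_continuous (gelfandTransform ℂ A a))
    have hiso : ∀ φ ψ : characterSpace ℂ A, r φ ψ → (φ a).re ≤ (ψ a).re :=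
      fun φ ψ hφψ => (Complex.le_def.1 ((hr φ ψ).1 hφψ a ha)).1
    have hre := h _ hcont hiso
    rw [Complex.le_def]
    refine ⟨hre, ?_⟩
    rw [char_real (hsa a ha) χ₁, char_real (hsa a ha) χ₂]
    simp
  · -- (b)
    intro a
    constructor
    · intro haI
      exact ⟨hsa a haI, fun χ₁ χ₂ h => (hr χ₁ χ₂).1 h a haI⟩
    · rintro ⟨ha, hiso⟩
      apply mem_of_char_approx hI ha
      intro ε hε
      by_cases hX : Nonempty (characterSpace ℂ A)
      swap
      · obtain ⟨b, hb⟩ := hI.1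
        exact ⟨b, hb, fun χ => absurd ⟨χ⟩ hX⟩
      set g : characterSpace ℂ A → ℝ := fun χ => (χ a).re with hg
      have hgc : Continuous g :=
        Complex.continuous_re.comp (map_continuous (gelfandTransform ℂ A a))
      have hrev : ∀ u v : characterSpace ℂ A, g u < g v →
          ∃ f ∈ I, (u f).re = g u ∧ (v f).re = g v := by
        intro u v huv
        have hnr : ¬ r v u := fun hvu =>
          absurd (Complex.le_def.1 (hiso v u hvu)).1 (not_le.mpr huv)
        rw [hr] at hnr
        push_neg at hnr
        obtain ⟨f₀, hf₀I, hf₀⟩ := hnr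
        have hf₀sa : IsSelfAdjoint f₀ := hsa f₀ hf₀I
        have hpq : (u f₀).re < (v f₀).re := by
          by_contra hcon
          push_neg at hcon
          apply hf₀
          rw [char_real hf₀sa u, char_real hf₀sa v, Complex.real_le_real]
          exact hcon
        clear hf₀
        set p := (u f₀).re with hp
        set q := (v f₀).re with hq
        set α : ℝ := (g v - g u) / (q - p) with hα
        have hα0 : 0 < α := div_pos (by linarith) (by linarith)
        set lin : ℝ → ℝ := fun s => α * s + (g u - α * p) with hlin
        have hlc : Continuous lin := by fun_prop
        have hlm : Monotone lin := by
          intro s t h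
          simp only [hlin]
          nlinarith [mul_le_mul_of_nonneg_left h hα0.le]
        have hαq : α * (q - p) = g v - g u := div_mul_cancel₀ _ (by linarith)
        refine ⟨cfc lin f₀, hI.2.2.1 f₀ hf₀I lin hlc hlm, ?_, ?_⟩
        · rw [char_cfc hf₀sa lin hlc u]
          show ((lin p : ℝ) : ℂ).re = g u
          simp only [Complex.ofReal_re, hlin]
          ring
        · rw [char_cfc hf₀sa lin hlc v]
          show ((lin q : ℝ) : ℂ).re = g v
          simp only [Complex.ofReal_re, hlin]
          nlinarith [hαq]
      have pair : ∀ u v : characterSpace ℂ A, ∃ f ∈ I, (u f).re = g u ∧ (v f).re = g v := by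
        intro u v
        rcases lt_trichotomy (g u) (g v) with h | h | h
        · exact hrev u v h
        · obtain ⟨b0, hb0⟩ := hI.1
          have hcc : Continuous (fun _ : ℝ => g u) := continuous_const
          have hcm : Monotone (fun _ : ℝ => g u) := monotone_const
          refine ⟨cfc (fun _ : ℝ => g u) b0, hI.2.2.1 b0 hb0 _ hcc hcm, ?_, ?_⟩
          · rw [char_cfc (hsa b0 hb0) _ hcc u]; simp
          · rw [char_cfc (hsa b0 hb0) _ hcc v]; simp [h]
        · obtain ⟨f, hfI, h1, h2⟩ := hrev v u h
          exact ⟨f, hfI, h2, h1⟩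
      have step1 : ∀ x : characterSpace ℂ A,
          ∃ hx ∈ I, (x hx).re = g x ∧ ∀ z : characterSpace ℂ A, g z - ε < (z hx).re := by
        intro x
        choose f hfI hfx hfy using pair x
        set U : characterSpace ℂ A → Set (characterSpace ℂ A) :=
          fun y => {z | g z - ε < (z (f y)).re} with hU
        have hUopen : ∀ y, IsOpen (U y) := fun y =>
          isOpen_lt (hgc.sub continuous_const)
            (Complex.continuous_re.comp (map_continuous (gelfandTransform ℂ A (f y))))
        have hUcov : Set.univ ⊆ ⋃ y, U y := by
          intro z _
          refine Set.mem_iUnion.2 ⟨z, ?_⟩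
          show g z - ε < (z (f z)).re
          rw [hfy z]
          linarith
        obtain ⟨t, htcov⟩ := isCompact_univ.elim_finite_subcover U hUopen hUcov
        have hxmem := htcov (Set.mem_univ x)
        rw [Set.mem_iUnion₂] at hxmem
        obtain ⟨y0, hy0t, -⟩ := hxmem
        have htne : t.Nonempty := ⟨y0, hy0t⟩
        obtain ⟨m, hmI, hmv⟩ := exists_finset_sup hI htne f fun i _ => hfI i
        refine ⟨m, hmI, ?_, ?_⟩
        · rw [hmv x]
          apply le_antisymm (Finset.sup'_le htne _ fun y _ => (hfx y).le)
          calc g x = (x (f y0)).re := (hfx y0).symm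
          _ ≤ _ := Finset.le_sup' (fun y => (x (f y)).re) hy0t
        · intro z
          have hz := htcov (Set.mem_univ z)
          rw [Set.mem_iUnion₂] at hz
          obtain ⟨y, hyt, hyU⟩ := hz
          have h2 : (z (f y)).re ≤ t.sup' htne fun i => (z (f i)).re :=
            Finset.le_sup' (fun i => (z (f i)).re) hyt
          rw [hmv z]
          exact lt_of_lt_of_le hyU h2
      choose hfun hhI hhx hhlow using step1
      set V : characterSpace ℂ A → Set (characterSpace ℂ A) :=
        fun x => {z | (z (hfun x)).re < g z + ε} with hV
      have hVopen : ∀ x, IsOpen (V x) := fun x =>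
        isOpen_lt (Complex.continuous_re.comp (map_continuous (gelfandTransform ℂ A (hfun x))))
          (hgc.add continuous_const)
      have hVcov : Set.univ ⊆ ⋃ x, V x := by
        intro z _
        refine Set.mem_iUnion.2 ⟨z, ?_⟩
        show (z (hfun z)).re < g z + ε
        rw [hhx z]
        linarith
      obtain ⟨t, htcov⟩ := isCompact_univ.elim_finite_subcover V hVopen hVcov
      obtain ⟨x0⟩ := hX
      have hx0mem := htcov (Set.mem_univ x0)
      rw [Set.mem_iUnion₂] at hx0mem
      obtain ⟨y0, hy0t, -⟩ := hx0mem
      have htne : t.Nonempty := ⟨y0, hy0t⟩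
      obtain ⟨H, hHI, hHv⟩ := exists_finset_inf hI htne hfun fun i _ => hhI i
      refine ⟨H, hHI, fun χ => ?_⟩
      rw [abs_le]
      constructor
      · have hz := htcov (Set.mem_univ χ)
        rw [Set.mem_iUnion₂] at hz
        obtain ⟨x, hxt, hxV⟩ := hz
        have h1 : (χ H).re ≤ (χ (hfun x)).re := by
          rw [hHv χ]
          exact Finset.inf'_le _ hxt
        have h2 : (χ (hfun x)).re < g χ + ε := hxV
        show -ε ≤ (χ a).re - (χ H).re
        have h3 : (χ a).re = g χ := rfl
        linarith
      · have h1 : g χ - ε < (χ H).re := by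
          rw [hHv χ]
          exact (Finset.lt_inf'_iff htne).2 fun x _ => hhlow x χ
        show (χ a).re - (χ H).re ≤ ε
        have h3 : (χ a).re = g χ := rfl
        linarith
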